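/- Let S be a string and suppose there are three runs S[i..i'], S[j..j'], S[k..k'] of S with the same period, where i < j < k. Then k > i'. -/

import Mathlib

open Classical

/-- `p` is a period of the string (list) `P`. -/
def IsPeriodOf {α : Type*} (P : List α) (p : ℕ) : Prop :=
  0 < p ∧ ∀ i, i + p < P.length → P[i]? = P[i + p]?

/-- The smallest period of `P`. -/
noncomputable def minPeriod {α : Type*} (P : List α) : ℕ := sInf {p | IsPeriodOf P p}

/-- `P` is periodic if its smallest period is at most `|P|/2`. -/
def ListPeriodic {α : Type*} (P : List α) : Prop := 2 * minPeriod P ≤ P.length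

/-- `P` occurs in `S` starting at position `i`. -/
def OccursAt {α : Type*} (P S : List α) (i : ℕ) : Prop :=
  i + P.length ≤ S.length ∧ (S.drop i).take P.length = P

/-- The set of starting positions of occurrences of `P` in `S`. -/
noncomputable def occ {α : Type*} (P S : List α) : Finset ℕ :=
  (Finset.range (S.length + 1)).filter (fun i => OccursAt P S i)

/-- Hamming distance between two (equal-length) strings. -/
noncomputable def hamming {α : Type*} (S T : List α) : ℕ :=
  ((List.range S.length).filter (fun i => S[i]? ≠ T[i]?)).length

/-- `P` is `(τ,k)`-resilient in `S`. -/
def Resilient {α : Type*} (P S : List α) (τ k : ℕ) : Prop :=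
  ∀ S' : List α, S'.length = S.length → hamming S S' ≤ k → τ ≤ (occ P S').card

/-- The fragment `S[x..y]` (inclusive). -/
def frag {α : Type*} (S : List α) (x y : ℕ) : List α := (S.drop x).take (y - x + 1)

/-- The fragment `S[x..y]` is a run of `S`. -/
def IsRun {α : Type*} (S : List α) (x y : ℕ) : Prop :=
  x ≤ y ∧ y < S.length ∧ 2 * minPeriod (frag S x y) ≤ y - x + 1 ∧
  (0 < x → ¬ IsPeriodOf (frag S (x - 1) y) (minPeriod (frag S x y))) ∧
  (y + 1 < S.length → ¬ IsPeriodOf (frag S x (y + 1)) (minPeriod (frag S x y)))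


lemma frag_length {α : Type*} (S : List α) (x y : ℕ) :
    (frag S x y).length = min (y - x + 1) (S.length - x) := by
  simp [frag]

lemma frag_get? {α : Type*} (S : List α) (x y n : ℕ) (h : n ≤ y - x) :
    (frag S x y)[n]? = S[x + n]? := by
  unfold frag
  rw [List.getElem?_take_of_lt (by omega), List.getElem?_drop]

lemma minPeriod_isPeriod {α : Type*} (S : List α) (x y : ℕ) (hxy : x ≤ y)
    (hy : y < S.length) : IsPeriodOf (frag S x y) (minPeriod (frag S x y)) := by
  have hlen : (frag S x y).length = y - x + 1 := by
    rw [frag_length]; omega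
  have hne : {p | IsPeriodOf (frag S x y) p}.Nonempty := by
    refine ⟨y - x + 1, ?_, ?_⟩
    · omega
    · intro n hn; rw [hlen] at hn; omega
  exact Nat.sInf_mem hne

lemma run_overlap {α : Type*} (S : List α) (a a' b b' : ℕ)
    (h1 : IsRun S a a') (h2 : IsRun S b b') (hab : a < b)
    (hp : minPeriod (frag S a a') = minPeriod (frag S b b')) :
    a' + 2 ≤ b + minPeriod (frag S b b') := by
  set p := minPeriod (frag S b b') with hpdef
  obtain ⟨haa, ha', hpa2, _, _⟩ := h1
  obtain ⟨hbb, hb', hpb2, hleft, _⟩ := h2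
  have hpa : IsPeriodOf (frag S a a') p := hp ▸ minPeriod_isPeriod S a a' haa ha'
  have hpb : IsPeriodOf (frag S b b') p := minPeriod_isPeriod S b b' hbb hb'
  have hp0 : 0 < p := hpb.1
  by_contra hcon
  push_neg at hcon
  -- overlap ≥ p : b + p ≤ a' + 1
  have hov : b + p ≤ a' + 1 := by omega
  apply hleft (by omega)
  refine ⟨hp0, fun n hn => ?_⟩
  have hlen : (frag S (b - 1) b').length = b' - b + 2 := by
    rw [frag_length]; omega
  rw [hlen] at hn
  have hg1 : (frag S (b-1) b')[n]? = S[b - 1 + n]? := frag_get? S _ _ _ (by omega)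
  have hg2 : (frag S (b-1) b')[n + p]? = S[b - 1 + (n + p)]? :=
    frag_get? S _ _ _ (by omega)
  rw [hg1, hg2]
  rcases Nat.eq_zero_or_pos n with hn0 | hn1
  · subst hn0
    have hm : (b - 1 - a) + p < (frag S a a').length := by
      rw [frag_length]; omega
    have := hpa.2 (b - 1 - a) hm
    rw [frag_get? S a a' _ (by omega), frag_get? S a a' _ (by omega)] at this
    have e1 : a + (b - 1 - a) = b - 1 + 0 := by omega
    have e2 : a + (b - 1 - a + p) = b - 1 + (0 + p) := by omega
    rw [e1, e2] at this
    exact this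
  · have hm : (n - 1) + p < (frag S b b').length := by
      rw [frag_length]; omega
    have := hpb.2 (n - 1) hm
    rw [frag_get? S b b' _ (by omega), frag_get? S b b' _ (by omega)] at this
    have e1 : b + (n - 1) = b - 1 + n := by omega
    have e2 : b + (n - 1 + p) = b - 1 + (n + p) := by omega
    rw [e1, e2] at this
    exact this

theorem stmt5 {α : Type*} (S : List α) (i i' j j' k k' : ℕ)
    (h1 : IsRun S i i') (h2 : IsRun S j j') (h3 : IsRun S k k')
    (hij : i < j) (hjk : j < k)
    (hp1 : minPeriod (frag S i i') = minPeriod (frag S j j'))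
    (hp2 : minPeriod (frag S j j') = minPeriod (frag S k k')) :
    i' < k := by
  set p := minPeriod (frag S j j') with hpdef
  have hA : i' + 2 ≤ j + p := run_overlap S i i' j j' h1 h2 hij hp1
  have hB : j' + 2 ≤ k + minPeriod (frag S k k') := run_overlap S j j' k k' h2 h3 hjk hp2
  rw [← hp2] at hB
  have h2len : 2 * p ≤ j' - j + 1 := h2.2.2.1
  have hjj : j ≤ j' := h2.1
  omega
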